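/- At the all-defector state (x,y,z,w)=(0,1,0,0), the Jacobian of the reduced three-dimensional replicator system (in variables x,y,z after eliminating w) has eigenvalues {0, ε−c, ε−c}. Consequently, if ε>c this equilibrium is unstable. -/

import Mathlib

noncomputable section

/-- Reduced replicator vector field of the reputation-based voluntary Prisoner's
Dilemma: state `p = (x, y, z)` with `w = 1 - x - y - z` eliminated; payoffs
`Π_C = x+z`, `Π_D = bx`, `Π_CE = (x+z)(1-c)+(y+w)(ε-c)`,
`Π_DE = x(b-c)-zc+(y+w)(ε-c)`; dynamics `ẋ = x(Π_C − Π̄)`, etc. -/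
def repField (b c ε : ℝ) (p : Fin 3 → ℝ) : Fin 3 → ℝ :=
  let x := p 0
  let y := p 1
  let z := p 2
  let w := 1 - x - y - z
  let PC := x + z
  let PD := b * x
  let PCE := (x + z) * (1 - c) + (y + w) * (ε - c)
  let PDE := x * (b - c) - z * c + (y + w) * (ε - c)
  let Pbar := x * PC + y * PD + z * PCE + w * PDE
  ![x * (PC - Pbar), y * (PD - Pbar), z * (PCE - Pbar)]

/-- Jacobian matrix of the reduced replicator field at `p`,
entry `(i, j)` being the partial derivative of the `i`-th component
with respect to the `j`-th variable. -/
def jac (b c ε : ℝ) (p : Fin 3 → ℝ) : Matrix (Fin 3) (Fin 3) ℝ :=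
  fun i j => deriv (fun t : ℝ => repField b c ε (Function.update p j t) i) (p j)

lemma dcubic (a3 a2 a1 a0 x : ℝ) :
    deriv (fun t : ℝ => a3*t^3+a2*t^2+a1*t+a0) x = 3*a3*x^2+2*a2*x+a1 := by
  have h := (((hasDerivAt_pow 3 x).const_mul a3).add
      (((hasDerivAt_pow 2 x).const_mul a2).add
        (((hasDerivAt_id x).const_mul a1).add_const a0)))
  have hfun : (fun t : ℝ => a3*t^3+a2*t^2+a1*t+a0)
      = fun t : ℝ => a3*t^3+(a2*t^2+(a1*(id t)+a0)) := by
    funext t; simp only [id]; ring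
  rw [hfun]; exact h.deriv.trans (by push_cast; ring)

lemma upd0 (t : ℝ) : Function.update (![0,1,0] : Fin 3 → ℝ) 0 t = ![t,1,0] := by
  funext k; fin_cases k <;> simp [Function.update]
lemma upd1 (t : ℝ) : Function.update (![0,1,0] : Fin 3 → ℝ) 1 t = ![0,t,0] := by
  funext k; fin_cases k <;> simp [Function.update]
lemma upd2 (t : ℝ) : Function.update (![0,1,0] : Fin 3 → ℝ) 2 t = ![0,1,t] := by
  funext k; fin_cases k <;> simp [Function.update]

lemma jacD (b c ε : ℝ) :
    jac b c ε ![0,1,0] = !![0,0,0; ε-c, ε-c, 0; 0,0,ε-c] := by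
  have e00 : jac b c ε ![0,1,0] 0 0 = 0 := by
    show deriv (fun t : ℝ => repField b c ε (Function.update ![0,1,0] 0 t) 0) (![0,1,0] 0) = 0
    simp only [upd0, Matrix.cons_val_zero]
    rw [show (fun t : ℝ => repField b c ε ![t,1,0] 0)
        = fun t : ℝ => (b-1-ε)*t^3+(1+ε-c-b)*t^2+0*t+0 from by
      funext t; simp [repField]; ring]
    rw [dcubic]; ring
  have e01 : jac b c ε ![0,1,0] 0 1 = 0 := by
    show deriv (fun t : ℝ => repField b c ε (Function.update ![0,1,0] 1 t) 0) (![0,1,0] 1) = 0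
    simp only [upd1, Matrix.cons_val_one, Matrix.head_cons]
    rw [show (fun t : ℝ => repField b c ε ![0,t,0] 0)
        = fun t : ℝ => 0*t^3+0*t^2+0*t+0 from by
      funext t; simp [repField]]
    rw [dcubic]; ring
  have e02 : jac b c ε ![0,1,0] 0 2 = 0 := by
    show deriv (fun t : ℝ => repField b c ε (Function.update ![0,1,0] 2 t) 0) (![0,1,0] 2) = 0
    simp only [upd2, Matrix.cons_val_two, Matrix.tail_cons, Matrix.head_cons]
    rw [show (fun t : ℝ => repField b c ε ![0,1,t] 0)
        = fun t : ℝ => 0*t^3+0*t^2+0*t+0 from by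
      funext t; simp [repField]]
    rw [dcubic]; ring
  have e10 : jac b c ε ![0,1,0] 1 0 = ε - c := by
    show deriv (fun t : ℝ => repField b c ε (Function.update ![0,1,0] 0 t) 1) (![0,1,0] 0) = ε - c
    simp only [upd0, Matrix.cons_val_zero]
    rw [show (fun t : ℝ => repField b c ε ![t,1,0] 1)
        = fun t : ℝ => 0*t^3+(b-1-ε)*t^2+(ε-c)*t+0 from by
      funext t; simp [repField]; ring]
    rw [dcubic]; ring
  have e11 : jac b c ε ![0,1,0] 1 1 = ε - c := by
    show deriv (fun t : ℝ => repField b c ε (Function.update ![0,1,0] 1 t) 1) (![0,1,0] 1) = ε - c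
    simp only [upd1, Matrix.cons_val_one, Matrix.head_cons]
    rw [show (fun t : ℝ => repField b c ε ![0,t,0] 1)
        = fun t : ℝ => 0*t^3+(ε-c)*t^2+(c-ε)*t+0 from by
      funext t; simp [repField]; ring]
    rw [dcubic]; simp only [Matrix.cons_val_zero]; ring
  have e12 : jac b c ε ![0,1,0] 1 2 = 0 := by
    show deriv (fun t : ℝ => repField b c ε (Function.update ![0,1,0] 2 t) 1) (![0,1,0] 2) = 0
    simp only [upd2, Matrix.cons_val_two, Matrix.tail_cons, Matrix.head_cons]
    rw [show (fun t : ℝ => repField b c ε ![0,1,t] 1)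
        = fun t : ℝ => 0*t^3+(-1)*t^2+0*t+0 from by
      funext t; simp [repField]; ring]
    rw [dcubic]; ring
  have e20 : jac b c ε ![0,1,0] 2 0 = 0 := by
    show deriv (fun t : ℝ => repField b c ε (Function.update ![0,1,0] 0 t) 2) (![0,1,0] 0) = 0
    simp only [upd0, Matrix.cons_val_zero]
    rw [show (fun t : ℝ => repField b c ε ![t,1,0] 2)
        = fun t : ℝ => 0*t^3+0*t^2+0*t+0 from by
      funext t; simp [repField]]
    rw [dcubic]; ring
  have e21 : jac b c ε ![0,1,0] 2 1 = 0 := by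
    show deriv (fun t : ℝ => repField b c ε (Function.update ![0,1,0] 1 t) 2) (![0,1,0] 1) = 0
    simp only [upd1, Matrix.cons_val_one, Matrix.head_cons]
    rw [show (fun t : ℝ => repField b c ε ![0,t,0] 2)
        = fun t : ℝ => 0*t^3+0*t^2+0*t+0 from by
      funext t; simp [repField]]
    rw [dcubic]; ring
  have e22 : jac b c ε ![0,1,0] 2 2 = ε - c := by
    show deriv (fun t : ℝ => repField b c ε (Function.update ![0,1,0] 2 t) 2) (![0,1,0] 2) = ε - c
    simp only [upd2, Matrix.cons_val_two, Matrix.tail_cons, Matrix.head_cons]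
    rw [show (fun t : ℝ => repField b c ε ![0,1,t] 2)
        = fun t : ℝ => (-1)*t^3+(1-ε)*t^2+(ε-c)*t+0 from by
      funext t; simp [repField]; ring]
    rw [dcubic]; ring
  funext i j
  fin_cases i <;> fin_cases j
  · exact e00
  · exact e01
  · exact e02
  · exact e10
  · exact e11
  · exact e12
  · exact e20
  · exact e21
  · exact e22

open Polynomial in
/-- At the all-defector state `(0,1,0,0)`, the Jacobian of the reduced
replicator system has eigenvalues `{0, ε−c, ε−c}` (characteristic polynomial
`X (X − (ε−c))²`); consequently, if `ε > c` this equilibrium is unstable: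
there is a positive eigenvalue. -/
theorem allD_jacobian_eigenvalues (b c ε : ℝ) (hb1 : 1 < b) (hb2 : b ≤ 2)
    (hc0 : 0 < c) (hc1 : c < 1) (he0 : 0 < ε) (he1 : ε < 1) :
    (jac b c ε ![0, 1, 0]).charpoly = X * (X - C (ε - c)) ^ 2 ∧
    (c < ε → ∃ lam : ℝ, 0 < lam ∧ ∃ v : Fin 3 → ℝ, v ≠ 0 ∧
      (jac b c ε ![0, 1, 0]).mulVec v = lam • v) := by
  rw [jacD]
  constructor
  · rw [Matrix.charpoly, Matrix.det_fin_three]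
    simp [Matrix.charmatrix_apply_eq, Matrix.charmatrix_apply_ne, map_sub, map_zero]
    ring
  · intro hce
    refine ⟨ε - c, by linarith, ![0, 0, 1], ?_, ?_⟩
    · intro h
      have := congrFun h 2
      simp at this
    · funext i
      fin_cases i <;>
        simp [Matrix.mulVec, dotProduct, Fin.sum_univ_three]
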